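/- arXiv:2102.10562 — 2 statements merged into one kernel-verified Lean document; each statement's English description precedes it below -/
import Mathlib

section
/- Let p be a strictly positive probability distribution on {0,1}^D, k : ({0,1}^D)² → ℝ a kernel, and for coordinate i define k_{p,i}(x,x') := (p(¬_i x)p(¬_i x')/(p(x)p(x'))) k(x,x') − (p(¬_i x)/p(x)) k(x, ¬_i x') − (p(¬_i x')/p(x')) k(¬_i x, x') + k(¬_i x, ¬_i x'). Then for any probability distribution q on {0,1}^D, E_{x,x'∼q}[k_{p,i}(x,x')] = M_k(q·p̃_i/p − q̃_i, q·p̃_i/p − q̃_i), where p̃_i(x) := p(¬_i x), q̃_i(x) := q(¬_i x), and (q·p̃_i/p)(x) := q(x)p(¬_i x)/p(x). -/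
theorem stein_kernel_expectation_as_quadratic_form
    (D : ℕ) (p q : (Fin D → Bool) → ℝ) (k : (Fin D → Bool) → (Fin D → Bool) → ℝ)
    (hp : ∀ x, 0 < p x) (hp1 : ∑ x, p x = 1)
    (hq0 : ∀ x, 0 ≤ q x) (hq1 : ∑ x, q x = 1)
    (hsym : ∀ x x', k x x' = k x' x) (i : Fin D) :
    (∑ x, ∑ x', q x * q x' *
        ((p (Function.update x i (!x i)) * p (Function.update x' i (!x' i)) /
            (p x * p x')) * k x x'
          - (p (Function.update x i (!x i)) / p x) *
              k x (Function.update x' i (!x' i))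
          - (p (Function.update x' i (!x' i)) / p x') *
              k (Function.update x i (!x i)) x'
          + k (Function.update x i (!x i)) (Function.update x' i (!x' i)))) =
    ∑ x, ∑ x',
      (q x * p (Function.update x i (!x i)) / p x - q (Function.update x i (!x i))) *
      (q x' * p (Function.update x' i (!x' i)) / p x' - q (Function.update x' i (!x' i))) *
      k x x' := by
  set σ : (Fin D → Bool) → (Fin D → Bool) := fun x => Function.update x i (!x i) with hσdef
  have hσ : Function.Involutive σ := by
    intro x
    funext j
    by_cases hj : j = i
    · subst hj; simp [σ]
    · simp [σ, Function.update_of_ne hj]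
  have reindex : ∀ F : (Fin D → Bool) → ℝ, (∑ x, F (σ x)) = ∑ x, F x :=
    fun F => Equiv.sum_comp (hσ.toPerm σ) F
  set f : (Fin D → Bool) → ℝ := fun x => q x * p (σ x) / p x with hf
  set g : (Fin D → Bool) → ℝ := fun x => q (σ x) with hg
  have expandL :
      (∑ x, ∑ x', q x * q x' *
        ((p (σ x) * p (σ x') / (p x * p x')) * k x x'
          - (p (σ x) / p x) * k x (σ x')
          - (p (σ x') / p x') * k (σ x) x'
          + k (σ x) (σ x'))) =
      (∑ x, ∑ x', f x * f x' * k x x')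
        - (∑ x, ∑ x', f x * q x' * k x (σ x'))
        - (∑ x, ∑ x', q x * f x' * k (σ x) x')
        + (∑ x, ∑ x', q x * q x' * k (σ x) (σ x')) := by
    have : ∀ x x' : Fin D → Bool, q x * q x' *
        ((p (σ x) * p (σ x') / (p x * p x')) * k x x'
          - (p (σ x) / p x) * k x (σ x')
          - (p (σ x') / p x') * k (σ x) x'
          + k (σ x) (σ x')) =
        f x * f x' * k x x' - f x * q x' * k x (σ x')
          - q x * f x' * k (σ x) x' + q x * q x' * k (σ x) (σ x') := by
      intro x x'; simp only [hf]; ring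
    simp only [this, Finset.sum_sub_distrib, Finset.sum_add_distrib]
  have expandR :
      (∑ x, ∑ x', (f x - g x) * (f x' - g x') * k x x') =
      (∑ x, ∑ x', f x * f x' * k x x')
        - (∑ x, ∑ x', f x * g x' * k x x')
        - (∑ x, ∑ x', g x * f x' * k x x')
        + (∑ x, ∑ x', g x * g x' * k x x') := by
    have : ∀ x x' : Fin D → Bool, (f x - g x) * (f x' - g x') * k x x' =
        f x * f x' * k x x' - f x * g x' * k x x'
          - g x * f x' * k x x' + g x * g x' * k x x' := by
      intro x x'; ring
    simp only [this, Finset.sum_sub_distrib, Finset.sum_add_distrib]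
  have h2 : (∑ x, ∑ x', f x * g x' * k x x') = ∑ x, ∑ x', f x * q x' * k x (σ x') := by
    refine Finset.sum_congr rfl fun x _ => ?_
    rw [← reindex (fun x' => f x * g x' * k x x')]
    refine Finset.sum_congr rfl fun x' _ => ?_
    simp [hg, hσ x']
  have h3 : (∑ x, ∑ x', g x * f x' * k x x') = ∑ x, ∑ x', q x * f x' * k (σ x) x' := by
    rw [← reindex (fun x => ∑ x', g x * f x' * k x x')]
    refine Finset.sum_congr rfl fun x _ => ?_
    refine Finset.sum_congr rfl fun x' _ => ?_
    simp [hg, hσ x]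
  have h4 : (∑ x, ∑ x', g x * g x' * k x x') = ∑ x, ∑ x', q x * q x' * k (σ x) (σ x') := by
    rw [← reindex (fun x => ∑ x', g x * g x' * k x x')]
    refine Finset.sum_congr rfl fun x _ => ?_
    rw [← reindex (fun x' => g (σ x) * g x' * k (σ x) x')]
    refine Finset.sum_congr rfl fun x' _ => ?_
    simp [hg, hσ x, hσ x']
  calc (∑ x, ∑ x', q x * q x' *
        ((p (σ x) * p (σ x') / (p x * p x')) * k x x'
          - (p (σ x) / p x) * k x (σ x')
          - (p (σ x') / p x') * k (σ x) x'
          + k (σ x) (σ x')))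
      = (∑ x, ∑ x', f x * f x' * k x x')
        - (∑ x, ∑ x', f x * q x' * k x (σ x'))
        - (∑ x, ∑ x', q x * f x' * k (σ x) x')
        + (∑ x, ∑ x', q x * q x' * k (σ x) (σ x')) := expandL
    _ = (∑ x, ∑ x', (f x - g x) * (f x' - g x') * k x x') := by
        rw [expandR, h2, h3, h4]
    _ = _ := rfl
end

section
/- If q = p on {0,1}^D (both strictly positive probability distributions), then for each coordinate i, E_{x,x'∼p}[k_{p,i}(x,x')] = 0, where k_{p,i} is the Stein kernel defined from p and any symmetric kernel k. -/
theorem stein_kernel_expectation_zero_of_eq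
    (D : ℕ) (p : (Fin D → Bool) → ℝ) (k : (Fin D → Bool) → (Fin D → Bool) → ℝ)
    (hp : ∀ x, 0 < p x) (hp1 : ∑ x, p x = 1)
    (hsym : ∀ x x', k x x' = k x' x) (i : Fin D) :
    (∑ x, ∑ x', p x * p x' *
        ((p (Function.update x i (!x i)) * p (Function.update x' i (!x' i)) /
            (p x * p x')) * k x x'
          - (p (Function.update x i (!x i)) / p x) *
              k x (Function.update x' i (!x' i))
          - (p (Function.update x' i (!x' i)) / p x') *
              k (Function.update x i (!x i)) x'
          + k (Function.update x i (!x i)) (Function.update x' i (!x' i)))) = 0 := by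
  set n : (Fin D → Bool) → (Fin D → Bool) := fun x => Function.update x i (!x i) with hn
  have hinv : Function.Involutive n := by
    intro x
    funext j
    by_cases h : j = i
    · subst h; simp [hn]
    · simp [hn, Function.update_apply, h]
  let e := hinv.toPerm
  have he : ∀ x, e x = n x := fun _ => rfl
  have key : ∀ x x', p x * p x' *
        ((p (n x) * p (n x') / (p x * p x')) * k x x'
          - (p (n x) / p x) * k x (n x')
          - (p (n x') / p x') * k (n x) x'
          + k (n x) (n x')) =
      p (n x) * p (n x') * k x x' - p (n x) * p x' * k x (n x')
        - p x * p (n x') * k (n x) x' + p x * p x' * k (n x) (n x') := by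
    intro x x'
    have h1 := (hp x).ne'
    have h2 := (hp x').ne'
    field_simp
  calc (∑ x, ∑ x', p x * p x' *
        ((p (n x) * p (n x') / (p x * p x')) * k x x'
          - (p (n x) / p x) * k x (n x')
          - (p (n x') / p x') * k (n x) x'
          + k (n x) (n x')))
      = ∑ x, ∑ x', (p (n x) * p (n x') * k x x' - p (n x) * p x' * k x (n x')
        - p x * p (n x') * k (n x) x' + p x * p x' * k (n x) (n x')) := by
        exact Finset.sum_congr rfl fun x _ => Finset.sum_congr rfl fun x' _ => key x x'
    _ = (∑ x, ∑ x', p (n x) * p (n x') * k x x') - (∑ x, ∑ x', p (n x) * p x' * k x (n x'))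
        - (∑ x, ∑ x', p x * p (n x') * k (n x) x') + (∑ x, ∑ x', p x * p x' * k (n x) (n x')) := by
        simp [Finset.sum_sub_distrib, Finset.sum_add_distrib]
    _ = 0 := by
        have h2 : (∑ x, ∑ x', p (n x) * p x' * k x (n x')) =
            ∑ x, ∑ x', p (n x) * p (n x') * k x x' := by
          refine Finset.sum_congr rfl fun x _ => ?_
          exact Fintype.sum_equiv e _ _ (fun x' => by simp [he, hinv x'])
        have h3 : (∑ x, ∑ x', p x * p (n x') * k (n x) x') =
            ∑ x, ∑ x', p (n x) * p (n x') * k x x' := by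
          refine Fintype.sum_equiv e _ _ (fun x => ?_)
          simp [he, hinv x]
        have h4 : (∑ x, ∑ x', p x * p x' * k (n x) (n x')) =
            ∑ x, ∑ x', p (n x) * p (n x') * k x x' := by
          refine Fintype.sum_equiv e _ _ (fun x => ?_)
          refine Fintype.sum_equiv e _ _ (fun x' => ?_)
          simp [he, hinv x, hinv x']
        rw [h2, h3, h4]
        ring
end
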